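/- For the weighted measure μ_γ with γ > -n, for every x ∈ ℝ^n and every r > |x|, there exist constants c, C > 0 depending only on n and γ such that c·(r - |x|)^{n+γ} ≤ μ_γ(B_r(x)) ≤ C·(r + |x|)^{n+γ}. -/

import Mathlib

open MeasureTheory Metric Set

noncomputable def muG (n : ℕ) (γ : ℝ) : Measure (EuclideanSpace ℝ (Fin n)) :=
  volume.withDensity fun z => ENNReal.ofReal (‖z‖ ^ γ)

lemma muG_meas (n : ℕ) (γ : ℝ) :
    Measurable fun z : EuclideanSpace ℝ (Fin n) => ENNReal.ofReal (‖z‖ ^ γ) := by fun_prop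

lemma muG_ball_smul (n : ℕ) [NeZero n] (γ : ℝ) {ρ : ℝ} (hρ : 0 < ρ) :
    muG n γ (ball 0 ρ) = ENNReal.ofReal (ρ ^ ((n : ℝ) + γ)) * muG n γ (ball 0 1) := by
  set E := EuclideanSpace ℝ (Fin n)
  have hfin : Module.finrank ℝ E = n := finrank_euclideanSpace_fin
  have hmap : Measure.map (ρ • ·) (volume : Measure E)
      = ENNReal.ofReal ((ρ ^ n)⁻¹) • volume := by
    rw [Measure.map_addHaar_smul volume hρ.ne']
    congr 2
    rw [hfin, abs_of_pos (by positivity)]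
  have hvol : (volume : Measure E) = ENNReal.ofReal (ρ ^ n) • Measure.map (ρ • ·) volume := by
    rw [hmap, smul_smul, ← ENNReal.ofReal_mul (by positivity),
      mul_inv_cancel₀ (by positivity), ENNReal.ofReal_one, one_smul]
  have hpre : (ρ • ·) ⁻¹' (ball (0 : E) ρ) = ball 0 1 := by
    ext y
    simp only [mem_preimage, mem_ball, dist_zero_right, norm_smul, Real.norm_eq_abs,
      abs_of_pos hρ]
    exact mul_lt_iff_lt_one_right hρ
  rw [muG, withDensity_apply _ measurableSet_ball, withDensity_apply _ measurableSet_ball]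
  calc ∫⁻ z in ball (0 : E) ρ, ENNReal.ofReal (‖z‖ ^ γ) ∂volume
      = ∫⁻ z in ball (0 : E) ρ, ENNReal.ofReal (‖z‖ ^ γ)
          ∂(ENNReal.ofReal (ρ ^ n) • Measure.map (ρ • ·) volume) := by rw [← hvol]
    _ = ENNReal.ofReal (ρ ^ n) * ∫⁻ z in ball (0 : E) ρ, ENNReal.ofReal (‖z‖ ^ γ)
          ∂(Measure.map (ρ • ·) volume) := by
        rw [Measure.restrict_smul, lintegral_smul_measure, smul_eq_mul]
    _ = ENNReal.ofReal (ρ ^ n) * ∫⁻ y in ball (0 : E) 1, ENNReal.ofReal (‖ρ • y‖ ^ γ) ∂volume := by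
        rw [setLIntegral_map measurableSet_ball (muG_meas n γ) (measurable_const_smul ρ), hpre]
    _ = ENNReal.ofReal (ρ ^ n) * ∫⁻ y in ball (0 : E) 1,
          ENNReal.ofReal (ρ ^ γ) * ENNReal.ofReal (‖y‖ ^ γ) ∂volume := by
        congr 1
        refine setLIntegral_congr_fun measurableSet_ball (fun y _ => ?_)
        rw [norm_smul, Real.norm_eq_abs, abs_of_pos hρ, Real.mul_rpow hρ.le (norm_nonneg y),
          ENNReal.ofReal_mul (Real.rpow_nonneg hρ.le γ)]
    _ = ENNReal.ofReal (ρ ^ n) * (ENNReal.ofReal (ρ ^ γ) *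
          ∫⁻ y in ball (0 : E) 1, ENNReal.ofReal (‖y‖ ^ γ) ∂volume) := by
        rw [lintegral_const_mul' _ _ ENNReal.ofReal_ne_top]
    _ = ENNReal.ofReal (ρ ^ ((n : ℝ) + γ)) *
          ∫⁻ y in ball (0 : E) 1, ENNReal.ofReal (‖y‖ ^ γ) ∂volume := by
        rw [← mul_assoc, ← ENNReal.ofReal_mul (by positivity), ← Real.rpow_natCast ρ n,
          ← Real.rpow_add hρ]

lemma muG_pos (n : ℕ) [NeZero n] (γ : ℝ) : 0 < muG n γ (ball 0 1) := by
  set E := EuclideanSpace ℝ (Fin n)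
  rw [muG, withDensity_apply _ measurableSet_ball]
  rw [lintegral_pos_iff_support (muG_meas n γ)]
  have hsub : ({0}ᶜ : Set E) ⊆ Function.support fun z : E => ENNReal.ofReal (‖z‖ ^ γ) := by
    intro z hz
    have : (0 : ℝ) < ‖z‖ ^ γ := Real.rpow_pos_of_pos (norm_pos_iff.2 hz) γ
    simp [Function.mem_support, ENNReal.ofReal_pos.2 this, (ENNReal.ofReal_pos.2 this).ne']
  calc (0 : ENNReal) < volume (ball (0 : E) 1) := measure_ball_pos volume 0 one_pos
    _ = volume (ball (0 : E) 1 \ {0}) := (measure_diff_null (measure_singleton 0)).symm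
    _ = (volume.restrict (ball (0 : E) 1)) ({0}ᶜ : Set E) := by
        rw [Measure.restrict_apply (MeasurableSet.singleton 0).compl, Set.inter_comm,
          Set.diff_eq, Set.inter_comm]
    _ ≤ _ := measure_mono hsub

lemma muG_lt_top (n : ℕ) [NeZero n] {γ : ℝ} (hγ : -(n : ℝ) < γ) :
    muG n γ (ball 0 1) < ⊤ := by
  set E := EuclideanSpace ℝ (Fin n)
  have hfin : Module.finrank ℝ E = n := finrank_euclideanSpace_fin
  set t : ℝ := (2 : ℝ)⁻¹ with ht_def
  have ht0 : (0 : ℝ) < t := by norm_num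
  have ht1 : t < 1 := by norm_num
  set A : ℕ → Set E := fun k => closedBall 0 (t ^ k) \ closedBall 0 (t ^ (k + 1)) with hA
  -- covering
  have hcov : ball (0 : E) 1 ⊆ {0} ∪ ⋃ k, A k := by
    intro z hz
    rcases eq_or_ne z 0 with rfl | hz0
    · exact Or.inl rfl
    · have hz1 : ‖z‖ < 1 := by simpa [mem_ball, dist_zero_right] using hz
      have hzpos : (0 : ℝ) < ‖z‖ := norm_pos_iff.2 hz0
      have hex : ∃ m : ℕ, t ^ m < ‖z‖ := exists_pow_lt_of_lt_one hzpos ht1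
      classical
      set m := Nat.find hex with hm
      have hmlt : t ^ m < ‖z‖ := Nat.find_spec hex
      have hm0 : m ≠ 0 := by
        intro h
        rw [h] at hmlt
        simp at hmlt
        linarith
      refine Or.inr (mem_iUnion.2 ⟨m - 1, ?_⟩)
      have hm1 : m - 1 + 1 = m := Nat.succ_pred_eq_of_ne_zero hm0
      constructor
      · have := Nat.find_min hex (m := m - 1) (by omega)
        simp only [not_lt] at this
        simpa [mem_closedBall, dist_zero_right] using this
      · simp only [mem_closedBall, dist_zero_right, not_le, hm1]
        exact hmlt
  set V : ENNReal := volume (ball (0 : E) 1) with hV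
  have hVlt : V < ⊤ := measure_ball_lt_top
  set M : ℝ := max 1 (t ^ γ) with hM
  have hM0 : 0 < M := lt_max_of_lt_left one_pos
  set θ : ℝ := t ^ γ * t ^ n with hθ
  have hθ0 : 0 < θ := by positivity
  have hθ1 : θ < 1 := by
    have : θ = t ^ (γ + (n : ℝ)) := by
      rw [hθ, Real.rpow_add ht0, Real.rpow_natCast]
    rw [this]
    exact Real.rpow_lt_one ht0.le ht1 (by linarith)
  -- bound on each annulus
  have hbound : ∀ k, muG n γ (A k) ≤ ENNReal.ofReal (M * θ ^ k) * V := by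
    intro k
    have hdens : ∀ z ∈ A k, ENNReal.ofReal (‖z‖ ^ γ) ≤ ENNReal.ofReal (M * (t ^ γ) ^ k) := by
      intro z hzA
      rcases hzA with ⟨hz1, hz2⟩
      have hzub : ‖z‖ ≤ t ^ k := by simpa [mem_closedBall, dist_zero_right] using hz1
      have hzlb : t ^ (k + 1) < ‖z‖ := by
        simpa [mem_closedBall, dist_zero_right, not_le] using hz2
      apply ENNReal.ofReal_le_ofReal
      have hpowpos : (0 : ℝ) < t ^ (k + 1) := by positivity
      have key : ‖z‖ ^ γ ≤ max ((t ^ k) ^ γ) ((t ^ (k + 1)) ^ γ) := by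
        rcases le_total 0 γ with hγ0 | hγ0
        · exact le_max_of_le_left (Real.rpow_le_rpow (norm_nonneg z) hzub hγ0)
        · exact le_max_of_le_right (Real.rpow_le_rpow_of_nonpos hpowpos hzlb.le hγ0)
      refine key.trans ?_
      have e1 : (t ^ k : ℝ) ^ γ = (t ^ γ) ^ k := by
        rw [← Real.rpow_natCast t k, ← Real.rpow_mul ht0.le, mul_comm,
          Real.rpow_mul ht0.le, Real.rpow_natCast]
      have e2 : (t ^ (k + 1) : ℝ) ^ γ = t ^ γ * (t ^ γ) ^ k := by
        rw [← Real.rpow_natCast t (k + 1), ← Real.rpow_mul ht0.le, mul_comm,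
          Real.rpow_mul ht0.le, Real.rpow_natCast, pow_succ, mul_comm ((t^γ)^k)]
      have hpk : (0 : ℝ) ≤ (t ^ γ) ^ k := by positivity
      apply max_le
      · rw [e1]
        exact le_mul_of_one_le_left hpk (le_max_left _ _)
      · rw [e2]
        exact mul_le_mul_of_nonneg_right (le_max_right _ _) hpk
    have hAm : MeasurableSet (A k) := measurableSet_closedBall.diff measurableSet_closedBall
    calc muG n γ (A k) = ∫⁻ z in A k, ENNReal.ofReal (‖z‖ ^ γ) ∂volume := by
          rw [muG, withDensity_apply _ hAm]
      _ ≤ ∫⁻ _ in A k, ENNReal.ofReal (M * (t ^ γ) ^ k) ∂volume := by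
          refine setLIntegral_mono (by fun_prop) hdens
      _ = ENNReal.ofReal (M * (t ^ γ) ^ k) * volume (A k) := by
          rw [setLIntegral_const]
      _ ≤ ENNReal.ofReal (M * (t ^ γ) ^ k) * volume (closedBall (0 : E) (t ^ k)) :=
          mul_le_mul_right (measure_mono diff_subset) _
      _ = ENNReal.ofReal (M * (t ^ γ) ^ k) * (ENNReal.ofReal ((t ^ k) ^ n) * V) := by
          rw [Measure.addHaar_closedBall volume 0 (by positivity), hfin]
      _ = ENNReal.ofReal (M * θ ^ k) * V := by
          rw [← mul_assoc, ← ENNReal.ofReal_mul (by positivity)]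
          congr 2
          rw [hθ, mul_pow, mul_assoc]
          congr 1
          rw [← pow_mul, ← pow_mul, Nat.mul_comm]
  -- sum up
  have hle : muG n γ (ball 0 1) ≤ muG n γ {0} + ∑' k, muG n γ (A k) := by
    refine (measure_mono hcov).trans ?_
    refine (measure_union_le _ _).trans ?_
    exact add_le_add_right (measure_iUnion_le _) _
  have h0 : muG n γ ({0} : Set E) = 0 := by
    refine (withDensity_absolutelyContinuous volume _) (measure_singleton 0)
  have hsum : ∑' k, muG n γ (A k) ≤ ENNReal.ofReal M * (1 - ENNReal.ofReal θ)⁻¹ * V := by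
    calc ∑' k, muG n γ (A k) ≤ ∑' k, ENNReal.ofReal (M * θ ^ k) * V :=
          ENNReal.tsum_le_tsum hbound
      _ = (∑' k, ENNReal.ofReal M * (ENNReal.ofReal θ) ^ k) * V := by
          rw [ENNReal.tsum_mul_right]
          congr 1
          refine tsum_congr fun k => ?_
          rw [ENNReal.ofReal_mul hM0.le, ENNReal.ofReal_pow hθ0.le]
      _ = ENNReal.ofReal M * (1 - ENNReal.ofReal θ)⁻¹ * V := by
          rw [ENNReal.tsum_mul_left, ENNReal.tsum_geometric]
  have hfin2 : ENNReal.ofReal M * (1 - ENNReal.ofReal θ)⁻¹ * V < ⊤ := by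
    apply ENNReal.mul_lt_top (ENNReal.mul_lt_top ENNReal.ofReal_lt_top _) hVlt
    rw [ENNReal.inv_lt_top, tsub_pos_iff_lt]
    exact lt_of_lt_of_le (ENNReal.ofReal_lt_one.2 hθ1) le_rfl
  calc muG n γ (ball 0 1) ≤ muG n γ {0} + ∑' k, muG n γ (A k) := hle
    _ = ∑' k, muG n γ (A k) := by rw [h0, zero_add]
    _ ≤ ENNReal.ofReal M * (1 - ENNReal.ofReal θ)⁻¹ * V := hsum
    _ < ⊤ := hfin2

open MeasureTheory Metric

/-- Two-sided bound for the weighted measure of a ball `B_r(x)` with `r > |x|`: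
`c (r-|x|)^{n+γ} ≤ μ_γ(B_r(x)) ≤ C (r+|x|)^{n+γ}` with `c, C` depending only on `n, γ`. -/
theorem stmt_1 (n : ℕ) (hn : 2 ≤ n) (γ : ℝ) (hγ : -(n : ℝ) < γ) :
    ∃ c > (0 : ℝ), ∃ C > (0 : ℝ), ∀ (x : EuclideanSpace ℝ (Fin n)) (r : ℝ), ‖x‖ < r →
      ENNReal.ofReal (c * (r - ‖x‖) ^ ((n : ℝ) + γ)) ≤
          (volume.withDensity fun z : EuclideanSpace ℝ (Fin n) =>
            ENNReal.ofReal (‖z‖ ^ γ)) (ball x r) ∧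
        (volume.withDensity fun z : EuclideanSpace ℝ (Fin n) =>
            ENNReal.ofReal (‖z‖ ^ γ)) (ball x r) ≤
          ENNReal.ofReal (C * (r + ‖x‖) ^ ((n : ℝ) + γ)) := by
  have : NeZero n := ⟨by omega⟩
  set E := EuclideanSpace ℝ (Fin n)
  set K : ENNReal := muG n γ (ball 0 1) with hK
  have hKpos : 0 < K := muG_pos n γ
  have hKlt : K < ⊤ := muG_lt_top n hγ
  set c : ℝ := K.toReal with hc
  have hc0 : 0 < c := ENNReal.toReal_pos hKpos.ne' hKlt.ne
  refine ⟨c, hc0, c, hc0, fun x r hxr => ?_⟩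
  have hx0 : (0 : ℝ) ≤ ‖x‖ := norm_nonneg x
  have hr1 : 0 < r - ‖x‖ := by linarith
  have hr2 : 0 < r + ‖x‖ := by linarith
  have hKof : ∀ ρ : ℝ, 0 < ρ → ENNReal.ofReal (c * ρ ^ ((n : ℝ) + γ)) =
      ENNReal.ofReal (ρ ^ ((n : ℝ) + γ)) * K := by
    intro ρ hρ
    rw [mul_comm, ENNReal.ofReal_mul (Real.rpow_nonneg hρ.le _), hc,
      ENNReal.ofReal_toReal hKlt.ne]
  have hμ : (volume.withDensity fun z : E => ENNReal.ofReal (‖z‖ ^ γ)) = muG n γ := rfl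
  rw [hμ]
  constructor
  · rw [hKof _ hr1, ← muG_ball_smul n γ hr1]
    refine measure_mono (ball_subset_ball' ?_)
    rw [dist_zero_left]
    linarith
  · rw [hKof _ hr2, ← muG_ball_smul n γ hr2]
    refine measure_mono (ball_subset_ball' ?_)
    rw [dist_comm, dist_zero_left]
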